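/- For |q| < |z₁| < |q⁻¹·z₂| with |q z₂| < |z₁| (i.e., |q z₂| < |z₁| < |q⁻¹ z₂|, |q|<1), the sum ∑_{n∈ℤ} z₁z₂qⁿ/(z₁−z₂qⁿ)² equals z₁z₂/(z₁−z₂)² + ∑_{m≥1} m z₁ᵐ z₂⁻ᵐ qᵐ/(1−qᵐ) + ∑_{m≥1} m z₁⁻ᵐ z₂ᵐ qᵐ/(1−qᵐ). -/

import Mathlib

set_option maxHeartbeats 1000000
lemma expand_aux {z w : ℂ} (h : ‖w‖ < ‖z‖) :
    HasSum (fun m : ℕ => ((m : ℂ) + 1) * (w / z) ^ (m + 1)) (z * w / (z - w) ^ 2) := by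
  have hzpos : 0 < ‖z‖ := (norm_nonneg w).trans_lt h
  have hz : z ≠ 0 := by simpa using hzpos.ne'
  have hr : ‖w / z‖ < 1 := by rw [norm_div]; exact (div_lt_one hzpos).2 h
  have hzw : z - w ≠ 0 := by
    intro e
    rw [sub_eq_zero] at e
    exact absurd h (by rw [e]; exact lt_irrefl _)
  have h0 := hasSum_coe_mul_geometric_of_norm_lt_one (𝕜 := ℂ) hr
  have h1 : HasSum (fun n : ℕ => ((n + 1 : ℕ) : ℂ) * (w / z) ^ (n + 1))
      ((w / z) / (1 - w / z) ^ 2) := by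
    refine (hasSum_nat_add_iff (f := fun n : ℕ => (n : ℂ) * (w / z) ^ n) 1).2 ?_
    simpa using h0
  have hwz : 1 - w / z ≠ 0 := by
    rw [sub_ne_zero]
    intro e
    apply hzw
    rw [sub_eq_zero]
    field_simp at e
    exact e
  have hval : (w / z) / (1 - w / z) ^ 2 = z * w / (z - w) ^ 2 := by
    rw [div_eq_div_iff (pow_ne_zero _ hwz) (pow_ne_zero _ hzw)]
    field_simp
  rw [hval] at h1
  convert h1 using 2 with m
  push_cast
  ring
lemma summ_aux {c d : ℝ} (hc0 : 0 ≤ c) (hc1 : c < 1) (hd0 : 0 ≤ d) (hd1 : d < 1) :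
    Summable (fun p : ℕ × ℕ => d ^ p.1 * (((p.2 : ℝ) + 1) * c ^ (p.2 + 1))) := by
  have hg : Summable (fun m : ℕ => ((m : ℝ) + 1) * c ^ (m + 1)) := by
    have hbase := (hasSum_coe_mul_geometric_of_norm_lt_one (𝕜 := ℝ)
      (by rwa [Real.norm_eq_abs, abs_of_nonneg hc0])).summable
    have h2 := (summable_nat_add_iff (f := fun n : ℕ => (n : ℝ) * c ^ n) 1).2 hbase
    refine h2.congr fun m => ?_
    push_cast
    ring
  exact Summable.mul_of_nonneg (summable_geometric_of_lt_one hd0 hd1) hg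
    (fun n => pow_nonneg hd0 n)
    (fun m => mul_nonneg (by positivity) (pow_nonneg hc0 _))
lemma core_aux {q a b : ℂ} (hq1 : ‖q‖ < 1) (hb : b ≠ 0) (h : ‖q * a‖ < ‖b‖) :
    ∃ S : ℂ,
      HasSum (fun n : ℕ => b * a * q ^ (n + 1) / (b - a * q ^ (n + 1)) ^ 2) S ∧
      HasSum (fun m : ℕ => ((m : ℂ) + 1) * (a / b) ^ (m + 1) * q ^ (m + 1) /
        (1 - q ^ (m + 1))) S := by
  have hbpos : 0 < ‖b‖ := (norm_nonneg _).trans_lt h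
  have hq0 : (0 : ℝ) ≤ ‖q‖ := norm_nonneg q
  set g : ℕ × ℕ → ℂ := fun p => ((p.2 : ℂ) + 1) * ((a / b) * q ^ (p.1 + 1)) ^ (p.2 + 1) with hg
  set c : ℝ := ‖q * a‖ / ‖b‖ with hc
  have hc0 : 0 ≤ c := div_nonneg (norm_nonneg _) hbpos.le
  have hc1 : c < 1 := (div_lt_one hbpos).2 h
  have hqn_le : ∀ n : ℕ, ‖q‖ ^ n ≤ 1 := fun n => pow_le_one₀ hq0 hq1.le
  have habq : ∀ n : ℕ, ‖(a / b) * q ^ (n + 1)‖ = c * ‖q‖ ^ n := by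
    intro n
    rw [norm_mul, norm_div, norm_pow, pow_succ', hc, norm_mul]
    ring
  -- summability of g
  have hsum_g : Summable g := by
    refine Summable.of_norm (Summable.of_nonneg_of_le (fun p => norm_nonneg _) ?_
      (summ_aux hc0 hc1 hq0 hq1))
    rintro ⟨n, m⟩
    have hnm : ‖((m : ℂ) + 1)‖ = (m : ℝ) + 1 := by
      rw [show ((m : ℂ) + 1) = ((m + 1 : ℕ) : ℂ) by push_cast; ring, Complex.norm_natCast]
      push_cast; ring
    calc ‖g (n, m)‖ = ((m : ℝ) + 1) * (c * ‖q‖ ^ n) ^ (m + 1) := by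
          show ‖((m : ℂ) + 1) * ((a / b) * q ^ (n + 1)) ^ (m + 1)‖ = _
          rw [norm_mul, norm_pow, hnm, habq n]
      _ = (((m : ℝ) + 1) * c ^ (m + 1)) * (‖q‖ ^ n) ^ (m + 1) := by
          rw [mul_pow]; ring
      _ ≤ (((m : ℝ) + 1) * c ^ (m + 1)) * ‖q‖ ^ n := by
          refine mul_le_mul_of_nonneg_left ?_ (by positivity)
          exact pow_le_of_le_one (pow_nonneg hq0 n) (hqn_le n) (Nat.succ_ne_zero m)
      _ = ‖q‖ ^ n * (((m : ℝ) + 1) * c ^ (m + 1)) := mul_comm _ _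
  -- fiberwise over m, for fixed n
  have hfib_n : ∀ n : ℕ, HasSum (fun m : ℕ => g (n, m))
      (b * a * q ^ (n + 1) / (b - a * q ^ (n + 1)) ^ 2) := by
    intro n
    have hlt : ‖a * q ^ (n + 1)‖ < ‖b‖ := by
      have he : ‖a * q ^ (n + 1)‖ = ‖q * a‖ * ‖q‖ ^ n := by
        rw [norm_mul, norm_mul, norm_pow, pow_succ']
        ring
      rw [he]
      calc ‖q * a‖ * ‖q‖ ^ n ≤ ‖q * a‖ * 1 :=
            mul_le_mul_of_nonneg_left (hqn_le n) (norm_nonneg _)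
        _ = ‖q * a‖ := mul_one _
        _ < ‖b‖ := h
    have h2 := expand_aux (z := b) (w := a * q ^ (n + 1)) hlt
    have hfe : (fun m : ℕ => g (n, m)) =
        (fun m : ℕ => ((m : ℂ) + 1) * ((a * q ^ (n + 1)) / b) ^ (m + 1)) := by
      funext m
      show ((m : ℂ) + 1) * ((a / b) * q ^ (n + 1)) ^ (m + 1) = _
      ring
    rw [hfe, show b * a * q ^ (n + 1) = b * (a * q ^ (n + 1)) by ring]
    exact h2
  -- fiberwise over n, for fixed m
  have hfib_m : ∀ m : ℕ, HasSum (fun n : ℕ => g (n, m))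
      (((m : ℂ) + 1) * (a / b) ^ (m + 1) * q ^ (m + 1) / (1 - q ^ (m + 1))) := by
    intro m
    have hx : ‖q ^ (m + 1)‖ < 1 := by
      rw [norm_pow]
      exact pow_lt_one₀ hq0 hq1 (Nat.succ_ne_zero m)
    have hx1 : (1 : ℂ) - q ^ (m + 1) ≠ 0 := by
      rw [sub_ne_zero]
      intro e
      rw [← e] at hx
      simp at hx
    have hgeo := hasSum_geometric_of_norm_lt_one hx
    have hshift : HasSum (fun n : ℕ => (q ^ (m + 1)) ^ (n + 1))
        ((1 - q ^ (m + 1))⁻¹ - 1) := by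
      refine (hasSum_nat_add_iff (f := fun n : ℕ => (q ^ (m + 1)) ^ n) 1).2 ?_
      simpa using hgeo
    have hmul := hshift.mul_left (((m : ℂ) + 1) * (a / b) ^ (m + 1))
    have hgm : (fun n : ℕ => g (n, m)) =
        (fun n : ℕ => ((m : ℂ) + 1) * (a / b) ^ (m + 1) * (q ^ (m + 1)) ^ (n + 1)) := by
      funext n
      show ((m : ℂ) + 1) * ((a / b) * q ^ (n + 1)) ^ (m + 1) = _
      rw [mul_pow, ← pow_mul, ← pow_mul, Nat.mul_comm (n + 1) (m + 1)]
      ring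
    have hval : ((m : ℂ) + 1) * (a / b) ^ (m + 1) * ((1 - q ^ (m + 1))⁻¹ - 1) =
        ((m : ℂ) + 1) * (a / b) ^ (m + 1) * q ^ (m + 1) / (1 - q ^ (m + 1)) := by
      field_simp
      ring
    rw [hgm]
    rw [← hval]
    exact hmul
  refine ⟨∑' p, g p, hsum_g.hasSum.prod_fiberwise hfib_n, ?_⟩
  have hswap : HasSum (fun p : ℕ × ℕ => g (p.2, p.1)) (∑' p, g p) :=
    ((Equiv.prodComm ℕ ℕ).hasSum_iff).2 hsum_g.hasSum
  exact hswap.prod_fiberwise fun m => hfib_m m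

/-- For `0 < |q| < 1`, `z₁ ≠ z₂qⁿ` for all `n ∈ ℤ`, and `|q z₂| < |z₁| < |q⁻¹ z₂|`:
`∑_{n∈ℤ} z₁z₂qⁿ/(z₁−z₂qⁿ)² = z₁z₂/(z₁−z₂)² + ∑_{m≥1} m z₁ᵐz₂⁻ᵐqᵐ/(1−qᵐ)
+ ∑_{m≥1} m z₁⁻ᵐz₂ᵐqᵐ/(1−qᵐ)`. -/
theorem propagator_expansion (q z₁ z₂ : ℂ) (hq0 : 0 < ‖q‖) (hq1 : ‖q‖ < 1)
    (hne : ∀ n : ℤ, z₁ ≠ z₂ * q ^ n)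
    (h1 : ‖q * z₂‖ < ‖z₁‖) (h2 : ‖z₁‖ < ‖q⁻¹ * z₂‖) :
    ∑' n : ℤ, z₁ * z₂ * q ^ n / (z₁ - z₂ * q ^ n) ^ 2 =
      z₁ * z₂ / (z₁ - z₂) ^ 2 +
        (∑' m : ℕ, ((m : ℂ) + 1) * z₁ ^ (m + 1) * z₂ ^ (-((m : ℤ) + 1)) * q ^ (m + 1) /
          (1 - q ^ (m + 1))) +
        ∑' m : ℕ, ((m : ℂ) + 1) * z₁ ^ (-((m : ℤ) + 1)) * z₂ ^ (m + 1) * q ^ (m + 1) /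
          (1 - q ^ (m + 1)) := by
  have hqne : q ≠ 0 := by simpa using hq0.ne'
  have hz1pos : 0 < ‖z₁‖ := (norm_nonneg _).trans_lt h1
  have hz1 : z₁ ≠ 0 := by simpa using hz1pos.ne'
  have h2' : ‖q * z₁‖ < ‖z₂‖ := by
    rw [norm_mul, norm_inv, inv_mul_eq_div, lt_div_iff₀ hq0] at h2
    rw [norm_mul, mul_comm]
    exact h2
  have hz2pos : 0 < ‖z₂‖ := (norm_nonneg _).trans_lt h2'
  have hz2 : z₂ ≠ 0 := by simpa using hz2pos.ne'
  obtain ⟨Sp, hP, hP'⟩ := core_aux (a := z₂) (b := z₁) hq1 hz1 h1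
  obtain ⟨Sn, hN, hN'⟩ := core_aux (a := z₁) (b := z₂) hq1 hz2 h2'
  -- positive part, shifted
  have hpos : HasSum (fun n : ℕ => z₁ * z₂ * q ^ (((n + 1 : ℕ) : ℤ)) /
      (z₁ - z₂ * q ^ (((n + 1 : ℕ) : ℤ))) ^ 2) Sp := by
    have hfe : (fun n : ℕ => z₁ * z₂ * q ^ (((n + 1 : ℕ) : ℤ)) /
        (z₁ - z₂ * q ^ (((n + 1 : ℕ) : ℤ))) ^ 2) =
        (fun n : ℕ => z₁ * z₂ * q ^ (n + 1) / (z₁ - z₂ * q ^ (n + 1)) ^ 2) := by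
      funext n
      rw [zpow_natCast]
    rw [hfe]
    exact hP
  -- natural part, including n = 0
  have hnat : HasSum (fun n : ℕ => z₁ * z₂ * q ^ ((n : ℤ)) /
      (z₁ - z₂ * q ^ ((n : ℤ))) ^ 2) (Sp + z₁ * z₂ / (z₁ - z₂) ^ 2) := by
    have h0 := (hasSum_nat_add_iff
      (f := fun n : ℕ => z₁ * z₂ * q ^ ((n : ℤ)) / (z₁ - z₂ * q ^ ((n : ℤ))) ^ 2) 1).1 hpos
    simpa using h0
  -- negative part
  have hneg : HasSum (fun n : ℕ => z₁ * z₂ * q ^ (-((n : ℤ) + 1)) /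
      (z₁ - z₂ * q ^ (-((n : ℤ) + 1))) ^ 2) Sn := by
    have key : (fun n : ℕ => z₁ * z₂ * q ^ (-((n : ℤ) + 1)) /
        (z₁ - z₂ * q ^ (-((n : ℤ) + 1))) ^ 2) =
        (fun n : ℕ => z₂ * z₁ * q ^ (n + 1) / (z₂ - z₁ * q ^ (n + 1)) ^ 2) := by
      funext n
      have he : q ^ (-((n : ℤ) + 1)) = (q ^ (n + 1 : ℕ))⁻¹ := by
        rw [show (-((n : ℤ) + 1)) = -((n + 1 : ℕ) : ℤ) by push_cast; ring, zpow_neg,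
          zpow_natCast]
      have hene : q ^ (n + 1) ≠ 0 := pow_ne_zero _ hqne
      have hlt : ‖z₁ * q ^ (n + 1)‖ < ‖z₂‖ := by
        have heq : ‖z₁ * q ^ (n + 1)‖ = ‖q * z₁‖ * ‖q‖ ^ n := by
          rw [norm_mul, norm_mul, norm_pow, pow_succ']
          ring
        rw [heq]
        calc ‖q * z₁‖ * ‖q‖ ^ n ≤ ‖q * z₁‖ * 1 :=
              mul_le_mul_of_nonneg_left (pow_le_one₀ (norm_nonneg q) hq1.le) (norm_nonneg _)
          _ = ‖q * z₁‖ := mul_one _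
          _ < ‖z₂‖ := h2'
      have hd2 : z₂ - z₁ * q ^ (n + 1) ≠ 0 := by
        intro e
        rw [sub_eq_zero] at e
        rw [← e] at hlt
        exact lt_irrefl _ hlt
      have hd1 : z₁ - z₂ * q ^ (-((n : ℤ) + 1)) ≠ 0 := by
        intro e
        rw [sub_eq_zero] at e
        exact hne (-((n : ℤ) + 1)) e
      rw [he] at hd1 ⊢
      rw [div_eq_div_iff (pow_ne_zero 2 hd1) (pow_ne_zero 2 hd2)]
      field_simp
      ring
    rw [key]
    exact hN
  have hZ : HasSum (fun n : ℤ => z₁ * z₂ * q ^ n / (z₁ - z₂ * q ^ n) ^ 2)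
      ((Sp + z₁ * z₂ / (z₁ - z₂) ^ 2) + Sn) := HasSum.of_nat_of_neg_add_one hnat hneg
  -- identify the two model sums
  have hT3 : HasSum (fun m : ℕ => ((m : ℂ) + 1) * z₁ ^ (-((m : ℤ) + 1)) * z₂ ^ (m + 1) *
      q ^ (m + 1) / (1 - q ^ (m + 1))) Sp := by
    have hfe : (fun m : ℕ => ((m : ℂ) + 1) * z₁ ^ (-((m : ℤ) + 1)) * z₂ ^ (m + 1) *
        q ^ (m + 1) / (1 - q ^ (m + 1))) =
        (fun m : ℕ => ((m : ℂ) + 1) * (z₂ / z₁) ^ (m + 1) * q ^ (m + 1) /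
          (1 - q ^ (m + 1))) := by
      funext m
      rw [show (-((m : ℤ) + 1)) = -((m + 1 : ℕ) : ℤ) by push_cast; ring, zpow_neg,
        zpow_natCast, div_pow]
      ring
    rw [hfe]
    exact hP'
  have hT2 : HasSum (fun m : ℕ => ((m : ℂ) + 1) * z₁ ^ (m + 1) * z₂ ^ (-((m : ℤ) + 1)) *
      q ^ (m + 1) / (1 - q ^ (m + 1))) Sn := by
    have hfe : (fun m : ℕ => ((m : ℂ) + 1) * z₁ ^ (m + 1) * z₂ ^ (-((m : ℤ) + 1)) *
        q ^ (m + 1) / (1 - q ^ (m + 1))) =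
        (fun m : ℕ => ((m : ℂ) + 1) * (z₁ / z₂) ^ (m + 1) * q ^ (m + 1) /
          (1 - q ^ (m + 1))) := by
      funext m
      rw [show (-((m : ℤ) + 1)) = -((m + 1 : ℕ) : ℤ) by push_cast; ring, zpow_neg,
        zpow_natCast, div_pow]
      ring
    rw [hfe]
    exact hN'
  rw [hZ.tsum_eq, hT2.tsum_eq, hT3.tsum_eq]
  ring
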